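/- Let m_X, m_V, μ, ν be Borel probability measures on ℝ^d and set m := m_X ⊗ m_V, a probability measure on ℝ^{2d} = ℝ^d_x × ℝ^d_v. Then for every π ∈ Π_X(μ,ν) one has H(π | m ⊗ m) ≥ H(μ|m_X) + H(ν|m_X). The measure π* := (μ ⊗ m_V) ⊗ (ν ⊗ m_V) belongs to Π_X(μ,ν) and satisfies H(π* | m ⊗ m) = H(μ|m_X) + H(ν|m_X). Moreover, if H(μ|m_X) + H(ν|m_X) < ∞, then π* is the unique minimizer of H(·|m ⊗ m) over Π_X(μ,ν). -/

import Mathlib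

open MeasureTheory Filter Topology

/- Relative entropy `H(P|Q)`: `∫ log (dP/dQ) dP` if `P ≪ Q` (and the integral makes
sense), and `+∞` otherwise. -/
open Classical in
noncomputable def relEntropy {α : Type*} [MeasurableSpace α] (P Q : Measure α) : EReal :=
  if P ≪ Q ∧ Integrable (llr P Q) P then ((∫ x, llr P Q x ∂P : ℝ) : EReal) else ⊤

/-- The set of couplings `Π(μ,ν)`: probability measures on `α × α` with first marginal `μ`
and second marginal `ν`. -/
def couplings {α : Type*} [MeasurableSpace α] (μ ν : Measure α) : Set (Measure (α × α)) :=
  {p | IsProbabilityMeasure p ∧ p.map Prod.fst = μ ∧ p.map Prod.snd = ν}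

/-- The set `Π_X(μ,ν)`: probability measures on `(α × α) × (α × α)`
(points `((x₁,v₁),(x₂,v₂))`) whose pushforwards under `((x₁,v₁),(x₂,v₂)) ↦ x₁` and
`((x₁,v₁),(x₂,v₂)) ↦ x₂` are `μ` and `ν` respectively. -/
def PiX {α : Type*} [MeasurableSpace α] (μ ν : Measure α) :
    Set (Measure ((α × α) × (α × α))) :=
  {p | IsProbabilityMeasure p ∧ p.map (fun z => z.1.1) = μ ∧ p.map (fun z => z.2.1) = ν}


section Helpers
open Real ENNReal


variable {α : Type*} [MeasurableSpace α]

lemma ennreal_mul_inv_le_one (a : ℝ≥0∞) : a * a⁻¹ ≤ 1 := by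
  rcases eq_or_ne a 0 with rfl | h0
  · simp
  rcases eq_or_ne a ⊤ with rfl | ht
  · simp
  · rw [ENNReal.mul_inv_cancel h0 ht]

lemma lintegral_inv_rnDeriv_le {P Q : Measure α} [IsFiniteMeasure P] [IsFiniteMeasure Q]
    (h : P ≪ Q) : ∫⁻ x, (P.rnDeriv Q x)⁻¹ ∂P ≤ Q Set.univ := by
  nth_rewrite 1 [← Measure.withDensity_rnDeriv_eq P Q h]
  change ∫⁻ x, (P.rnDeriv Q)⁻¹ x ∂(Q.withDensity (P.rnDeriv Q)) ≤ Q Set.univ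
  rw [lintegral_withDensity_eq_lintegral_mul Q (Measure.measurable_rnDeriv P Q)
    (Measure.measurable_rnDeriv P Q).inv]
  calc ∫⁻ x, (P.rnDeriv Q * fun x => (P.rnDeriv Q x)⁻¹) x ∂Q
      ≤ ∫⁻ _, 1 ∂Q := lintegral_mono fun x => ennreal_mul_inv_le_one _
    _ = Q Set.univ := lintegral_one

lemma integrable_inv_rnDeriv {P Q : Measure α} [IsFiniteMeasure P] [IsFiniteMeasure Q]
    (h : P ≪ Q) : Integrable (fun x => ((P.rnDeriv Q x)⁻¹).toReal) P := by
  refine integrable_toReal_of_lintegral_ne_top (Measure.measurable_rnDeriv P Q).inv.aemeasurable ?_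
  exact ((lintegral_inv_rnDeriv_le h).trans_lt (measure_lt_top _ _)).ne

lemma rnDeriv_facts {P Q : Measure α} [IsFiniteMeasure P] [IsFiniteMeasure Q] (h : P ≪ Q) :
    ∀ᵐ x ∂P, 0 < P.rnDeriv Q x ∧ P.rnDeriv Q x < ⊤ := by
  filter_upwards [Measure.rnDeriv_pos h, (Measure.rnDeriv_lt_top P Q).filter_mono h.ae_le]
    with x h1 h2 using ⟨h1, h2⟩

lemma integrable_neg_llr {P Q : Measure α} [IsFiniteMeasure P] [IsFiniteMeasure Q]
    (h : P ≪ Q) : Integrable (fun x => max (-llr P Q x) 0) P := by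
  refine Integrable.mono' (integrable_inv_rnDeriv h)
    (((measurable_llr P Q).neg.max measurable_const).aestronglyMeasurable) ?_
  filter_upwards [rnDeriv_facts h] with x hx
  have hr : 0 < (P.rnDeriv Q x).toReal := ENNReal.toReal_pos hx.1.ne' hx.2.ne
  rw [Real.norm_eq_abs, abs_of_nonneg (le_max_right _ _), ENNReal.toReal_inv]
  have hlog : -llr P Q x ≤ (P.rnDeriv Q x).toReal⁻¹ - 1 := by
    have := Real.log_le_sub_one_of_pos (inv_pos.mpr hr)
    rwa [Real.log_inv] at this
  have hinv : (0:ℝ) ≤ (P.rnDeriv Q x).toReal⁻¹ := by positivity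
  exact max_le (by linarith) (by linarith)

lemma integral_one_sub_inv_rnDeriv {P Q : Measure α} [IsProbabilityMeasure P]
    [IsProbabilityMeasure Q] (h : P ≪ Q) :
    ∫ x, (1 - ((P.rnDeriv Q x)⁻¹).toReal) ∂P ≥ 0 := by
  have hg := integrable_inv_rnDeriv h
  rw [integral_sub (integrable_const 1) hg, integral_const]
  simp only [measure_univ, probReal_univ, ENNReal.toReal_one, one_smul, smul_eq_mul, mul_one, ge_iff_le,
    sub_nonneg]
  have hfin : ∀ᵐ x ∂P, (P.rnDeriv Q x)⁻¹ < ⊤ := by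
    filter_upwards [rnDeriv_facts h] with x hx using ENNReal.inv_lt_top.mpr hx.1
  rw [integral_toReal (f := fun x => (P.rnDeriv Q x)⁻¹) (Measure.measurable_rnDeriv P Q).inv.aemeasurable hfin]
  have := lintegral_inv_rnDeriv_le h
  rw [measure_univ] at this
  calc (∫⁻ x, (P.rnDeriv Q x)⁻¹ ∂P).toReal ≤ (1:ℝ≥0∞).toReal :=
        ENNReal.toReal_mono (by simp) this
    _ = 1 := by simp

lemma ae_llr_ge {P Q : Measure α} [IsFiniteMeasure P] [IsFiniteMeasure Q] (h : P ≪ Q) :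
    ∀ᵐ x ∂P, 1 - ((P.rnDeriv Q x)⁻¹).toReal ≤ llr P Q x := by
  filter_upwards [rnDeriv_facts h] with x hx
  have hr : 0 < (P.rnDeriv Q x).toReal := ENNReal.toReal_pos hx.1.ne' hx.2.ne
  have := Real.log_le_sub_one_of_pos (inv_pos.mpr hr)
  rw [Real.log_inv] at this
  rw [ENNReal.toReal_inv]
  unfold llr
  linarith

lemma integral_llr_nonneg' {P Q : Measure α} [IsProbabilityMeasure P] [IsProbabilityMeasure Q]
    (h : P ≪ Q) (hi : Integrable (llr P Q) P) : 0 ≤ ∫ x, llr P Q x ∂P := by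
  have h1 := integral_one_sub_inv_rnDeriv h
  have h2 : ∫ x, (1 - ((P.rnDeriv Q x)⁻¹).toReal) ∂P ≤ ∫ x, llr P Q x ∂P :=
    integral_mono_ae ((integrable_const 1).sub (integrable_inv_rnDeriv h)) hi (ae_llr_ge h)
  linarith

lemma eq_of_integral_llr_eq_zero {P Q : Measure α} [IsProbabilityMeasure P]
    [IsProbabilityMeasure Q] (h : P ≪ Q) (hi : Integrable (llr P Q) P)
    (hz : ∫ x, llr P Q x ∂P = 0) : P = Q := by
  set f := P.rnDeriv Q with hf
  -- the nonnegative function llr - (1 - 1/r) has zero integral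
  have hgint := integrable_inv_rnDeriv h
  have hc1 : Integrable (fun x => 1 - ((f x)⁻¹).toReal) P := (integrable_const 1).sub hgint
  have hint2 : Integrable (fun x => llr P Q x - (1 - ((f x)⁻¹).toReal)) P := hi.sub hc1
  have hnn : ∀ᵐ x ∂P, 0 ≤ llr P Q x - (1 - ((f x)⁻¹).toReal) := by
    filter_upwards [ae_llr_ge h] with x hx using by linarith
  have hle : ∫ x, (llr P Q x - (1 - ((f x)⁻¹).toReal)) ∂P ≤ 0 := by
    rw [integral_sub hi hc1, hz]
    have h3 := integral_one_sub_inv_rnDeriv h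
    linarith
  have hzero : ∀ᵐ x ∂P, llr P Q x - (1 - ((f x)⁻¹).toReal) = 0 := by
    have hint0 : ∫ x, (llr P Q x - (1 - ((f x)⁻¹).toReal)) ∂P = 0 :=
      le_antisymm hle (integral_nonneg_of_ae hnn)
    exact (integral_eq_zero_iff_of_nonneg_ae hnn hint2).mp hint0
  -- deduce f = 1 P-a.e.
  have hf1 : ∀ᵐ x ∂P, f x = 1 := by
    filter_upwards [hzero, rnDeriv_facts h] with x hx hx2
    have hr : 0 < (f x).toReal := ENNReal.toReal_pos hx2.1.ne' hx2.2.ne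
    rw [ENNReal.toReal_inv] at hx
    by_contra hne
    have hrne : (f x).toReal ≠ 1 := fun hc => hne (by
      rw [show f x = P.rnDeriv Q x from rfl, ← ENNReal.ofReal_toReal hx2.2.ne]
      rw [show (P.rnDeriv Q x).toReal = (f x).toReal from rfl, hc]; simp)
    have hinvne : (f x).toReal⁻¹ ≠ 1 := fun hc => hrne (by
      field_simp at hc; simp [hc])
    have := Real.log_lt_sub_one_of_pos (inv_pos.mpr hr) hinvne
    rw [Real.log_inv] at this
    unfold llr at hx
    linarith
  -- conclude f = 1 Q-a.e.
  have hs : MeasurableSet {x | f x ≠ 1} :=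
    ((Measure.measurable_rnDeriv P Q) (measurableSet_singleton 1)).compl
  have hPs : P {x | f x ≠ 1} = 0 := by
    rw [ae_iff] at hf1; exact hf1
  have hPwd : Q.withDensity f = P := Measure.withDensity_rnDeriv_eq P Q h
  have hsplit : ∫⁻ x, f x ∂Q = ∫⁻ x in {x | f x ≠ 1}, f x ∂Q
      + ∫⁻ x in {x | f x ≠ 1}ᶜ, f x ∂Q := (lintegral_add_compl f hs).symm
  have h1 : ∫⁻ x in {x | f x ≠ 1}, f x ∂Q = 0 := by
    rw [← withDensity_apply f hs, hPwd]; exact hPs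
  have h2 : ∫⁻ x in {x | f x ≠ 1}ᶜ, f x ∂Q = Q {x | f x ≠ 1}ᶜ := by
    rw [setLIntegral_congr_fun (g := fun _ => 1) hs.compl (fun x hx => by
      simpa using not_not.mp hx)]
    simp
  have htot : ∫⁻ x, f x ∂Q = 1 := by
    calc ∫⁻ x, f x ∂Q = Q.withDensity f Set.univ := by
          rw [withDensity_apply f MeasurableSet.univ, Measure.restrict_univ]
      _ = P Set.univ := by rw [hPwd]
      _ = 1 := measure_univ
  have hQc : Q {x | f x ≠ 1}ᶜ = 1 := by
    rw [hsplit, h1, zero_add] at htot; rw [h2] at htot; exact htot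
  have hQs : Q {x | f x ≠ 1} = 0 := by
    have := measure_add_measure_compl hs (μ := Q)
    rw [hQc, measure_univ] at this
    by_contra hne
    have h0 : Q {x | f x ≠ 1} + 1 = 0 + 1 := by rw [this, zero_add]
    exact hne ((ENNReal.add_left_inj (by norm_num)).mp h0)
  have hfQ : f =ᵐ[Q] 1 := by rw [Filter.EventuallyEq, ae_iff]; exact hQs
  calc P = Q.withDensity f := hPwd.symm
    _ = Q.withDensity 1 := withDensity_congr_ae hfQ
    _ = Q := withDensity_one

lemma integrable_of_add_neg_parts {P : Measure α} {A E : α → ℝ}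
    (hA : AEStronglyMeasurable A P) (hD : Integrable (fun x => A x + E x) P)
    (hAn : Integrable (fun x => max (-A x) 0) P) (hEn : Integrable (fun x => max (-E x) 0) P) :
    Integrable A P := by
  refine Integrable.mono' ((hD.abs.add hEn).add hAn) hA (ae_of_all _ fun x => ?_)
  have h1 : -E x ≤ max (-E x) 0 := le_max_left _ _
  have h2 : (0:ℝ) ≤ max (-E x) 0 := le_max_right _ _
  have h3 : -A x ≤ max (-A x) 0 := le_max_left _ _
  have h4 : (0:ℝ) ≤ max (-A x) 0 := le_max_right _ _
  have h5 : A x + E x ≤ |A x + E x| := le_abs_self _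
  have h6 : (0:ℝ) ≤ |A x + E x| := abs_nonneg _
  rw [Real.norm_eq_abs, abs_le]
  constructor <;> simp only [Pi.add_apply] <;> linarith

lemma map_fst_fst_prod (P1 P2 P3 P4 : Measure α) [IsProbabilityMeasure P2]
    [IsProbabilityMeasure P3] [IsProbabilityMeasure P4] [SFinite P1] :
    ((P1.prod P2).prod (P3.prod P4)).map (fun z : (α × α) × α × α => z.1.1) = P1 := by
  have h : (fun z : (α × α) × α × α => z.1.1) = Prod.fst ∘ Prod.fst := rfl
  rw [h, ← Measure.map_map measurable_fst measurable_fst, Measure.map_fst_prod, measure_univ,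
    one_smul, Measure.map_fst_prod, measure_univ, one_smul]

lemma map_snd_fst_prod (P1 P2 P3 P4 : Measure α) [IsProbabilityMeasure P1]
    [IsProbabilityMeasure P2] [IsProbabilityMeasure P4] [SFinite P3] :
    ((P1.prod P2).prod (P3.prod P4)).map (fun z : (α × α) × α × α => z.2.1) = P3 := by
  have h : (fun z : (α × α) × α × α => z.2.1) = Prod.fst ∘ Prod.snd := rfl
  rw [h, ← Measure.map_map measurable_fst measurable_snd, Measure.map_snd_prod, measure_univ,
    one_smul, Measure.map_fst_prod, measure_univ, one_smul]

lemma withDensity_prod_withDensity {Q1 Q2 : Measure α} [SigmaFinite Q1] [SigmaFinite Q2]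
    {a b : α → ℝ≥0∞} (ha : Measurable a) (hb : Measurable b)
    [SigmaFinite (Q1.withDensity a)] [SigmaFinite (Q2.withDensity b)] :
    (Q1.withDensity a).prod (Q2.withDensity b)
      = (Q1.prod Q2).withDensity (fun z => a z.1 * b z.2) :=
  Measure.prod_eq fun s t hs ht => by
    rw [withDensity_apply _ (hs.prod ht), ← Measure.prod_restrict,
      lintegral_prod_mul ha.aemeasurable hb.aemeasurable,
      ← withDensity_apply _ hs, ← withDensity_apply _ ht]

variable (mX mV μ ν : Measure α) [IsProbabilityMeasure mX] [IsProbabilityMeasure mV]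
  [IsProbabilityMeasure μ] [IsProbabilityMeasure ν]

lemma prod_prod_withDensity (hμ : μ ≪ mX) (hν : ν ≪ mX) :
    (μ.prod mV).prod (ν.prod mV)
      = ((mX.prod mV).prod (mX.prod mV)).withDensity
          (fun z => μ.rnDeriv mX z.1.1 * ν.rnDeriv mX z.2.1) := by
  haveI : SigmaFinite (mX.withDensity (μ.rnDeriv mX)) := by
    rw [Measure.withDensity_rnDeriv_eq μ mX hμ]; infer_instance
  haveI : SigmaFinite (mX.withDensity (ν.rnDeriv mX)) := by
    rw [Measure.withDensity_rnDeriv_eq ν mX hν]; infer_instance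
  haveI : SigmaFinite (mV.withDensity (1 : α → ℝ≥0∞)) := by
    rw [withDensity_one]; infer_instance
  have h1 : μ.prod mV = (mX.prod mV).withDensity (fun y => μ.rnDeriv mX y.1) := by
    have h := withDensity_prod_withDensity (Q1 := mX) (Q2 := mV)
      (a := μ.rnDeriv mX) (b := (1 : α → ℝ≥0∞)) (Measure.measurable_rnDeriv μ mX) measurable_one
    rw [Measure.withDensity_rnDeriv_eq μ mX hμ, withDensity_one] at h
    simpa only [Pi.one_apply, mul_one] using h
  have h2 : ν.prod mV = (mX.prod mV).withDensity (fun y => ν.rnDeriv mX y.1) := by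
    have h := withDensity_prod_withDensity (Q1 := mX) (Q2 := mV)
      (a := ν.rnDeriv mX) (b := (1 : α → ℝ≥0∞)) (Measure.measurable_rnDeriv ν mX) measurable_one
    rw [Measure.withDensity_rnDeriv_eq ν mX hν, withDensity_one] at h
    simpa only [Pi.one_apply, mul_one] using h
  haveI : SigmaFinite ((mX.prod mV).withDensity (fun y => μ.rnDeriv mX y.1)) := by
    rw [← h1]; infer_instance
  haveI : SigmaFinite ((mX.prod mV).withDensity (fun y => ν.rnDeriv mX y.1)) := by
    rw [← h2]; infer_instance
  have h3 := withDensity_prod_withDensity (Q1 := mX.prod mV) (Q2 := mX.prod mV)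
    (a := fun y : α × α => μ.rnDeriv mX y.1) (b := fun y : α × α => ν.rnDeriv mX y.1)
    ((Measure.measurable_rnDeriv μ mX).comp measurable_fst)
    ((Measure.measurable_rnDeriv ν mX).comp measurable_fst)
  rw [← h1, ← h2] at h3
  exact h3

lemma ae_pull {β : Type*} [MeasurableSpace β] {p : Measure β} {g : β → α} {m : Measure α}
    (hg : Measurable g) (h1 : p.map g = m) {Pr : α → Prop}
    (hs : MeasurableSet {x | Pr x}) (h : ∀ᵐ x ∂m, Pr x) : ∀ᵐ z ∂p, Pr (g z) := by
  rw [← h1] at h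
  exact (ae_map_iff hg.aemeasurable hs).mp h

lemma master {p : Measure ((α × α) × α × α)} [IsProbabilityMeasure p]
    (h1 : p.map (fun z : (α × α) × α × α => z.1.1) = μ)
    (h2 : p.map (fun z : (α × α) × α × α => z.2.1) = ν)
    (hpQ : p ≪ (mX.prod mV).prod (mX.prod mV))
    (hint : Integrable (llr p ((mX.prod mV).prod (mX.prod mV))) p) :
    μ ≪ mX ∧ ν ≪ mX ∧ Integrable (llr μ mX) μ ∧ Integrable (llr ν mX) ν ∧
    p ≪ (μ.prod mV).prod (ν.prod mV) ∧
    Integrable (llr p ((μ.prod mV).prod (ν.prod mV))) p ∧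
    ∫ z, llr p ((mX.prod mV).prod (mX.prod mV)) z ∂p
      = ∫ z, llr p ((μ.prod mV).prod (ν.prod mV)) z ∂p
        + ∫ x, llr μ mX x ∂μ + ∫ x, llr ν mX x ∂ν := by
  set Q := (mX.prod mV).prod (mX.prod mV) with hQ
  set πs := (μ.prod mV).prod (ν.prod mV) with hπs
  set ρ := μ.rnDeriv mX with hρ
  set σ := ν.rnDeriv mX with hσ
  have hg1 : Measurable (fun z : (α × α) × α × α => z.1.1) := measurable_fst.comp measurable_fst
  have hg2 : Measurable (fun z : (α × α) × α × α => z.2.1) := measurable_fst.comp measurable_snd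
  have hρm : Measurable ρ := Measure.measurable_rnDeriv μ mX
  have hσm : Measurable σ := Measure.measurable_rnDeriv ν mX
  -- marginal absolute continuity
  have hμ : μ ≪ mX := by
    rw [← h1, ← map_fst_fst_prod mX mV mX mV]
    exact hpQ.map hg1
  have hν : ν ≪ mX := by
    rw [← h2, ← map_snd_fst_prod mX mV mX mV]
    exact hpQ.map hg2
  -- a.e. positivity/finiteness of the densities, pulled back to p
  have hsetρ : MeasurableSet {x | 0 < ρ x ∧ ρ x < ⊤} := by
    have : {x | 0 < ρ x ∧ ρ x < ⊤} = (ρ ⁻¹' {0})ᶜ ∩ (ρ ⁻¹' {⊤})ᶜ := by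
      ext x; simp [pos_iff_ne_zero, lt_top_iff_ne_top]
    rw [this]
    exact ((hρm (measurableSet_singleton 0)).compl).inter
      ((hρm (measurableSet_singleton ⊤)).compl)
  have hsetσ : MeasurableSet {x | 0 < σ x ∧ σ x < ⊤} := by
    have : {x | 0 < σ x ∧ σ x < ⊤} = (σ ⁻¹' {0})ᶜ ∩ (σ ⁻¹' {⊤})ᶜ := by
      ext x; simp [pos_iff_ne_zero, lt_top_iff_ne_top]
    rw [this]
    exact ((hσm (measurableSet_singleton 0)).compl).inter
      ((hσm (measurableSet_singleton ⊤)).compl)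
  have hρp : ∀ᵐ z ∂p, 0 < ρ (z.1.1) ∧ ρ (z.1.1) < ⊤ :=
    ae_pull hg1 h1 hsetρ (rnDeriv_facts hμ)
  have hσp : ∀ᵐ z ∂p, 0 < σ (z.2.1) ∧ σ (z.2.1) < ⊤ :=
    ae_pull hg2 h2 hsetσ (rnDeriv_facts hν)
  -- the density of πs with respect to Q
  set w : (α × α) × α × α → ℝ≥0∞ := fun z => ρ z.1.1 * σ z.2.1 with hw
  have hwm : Measurable w := (hρm.comp hg1).mul (hσm.comp hg2)
  have hπsd : πs = Q.withDensity w := prod_prod_withDensity mX mV μ ν hμ hν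
  -- p ≪ πs
  have hpπ : p ≪ πs := by
    rw [hπsd]
    refine Measure.AbsolutelyContinuous.mk fun A hA h0 => ?_
    rw [withDensity_apply _ hA] at h0
    have hA0 : ∀ᵐ z ∂Q, z ∈ A → w z = 0 := (setLIntegral_eq_zero_iff hA hwm).mp h0
    have hA0p : ∀ᵐ z ∂p, z ∈ A → w z = 0 := hA0.filter_mono hpQ.ae_le
    have : ∀ᵐ z ∂p, z ∉ A := by
      filter_upwards [hA0p, hρp, hσp] with z hz hz1 hz2 hmem
      exact absurd (hz hmem) (mul_ne_zero hz1.1.ne' hz2.1.ne')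
    simpa using ae_iff.mp this
  -- chain rule for the densities, a.e. with respect to p
  have c1 : ∀ᵐ z ∂p, p.rnDeriv πs z * πs.rnDeriv Q z = p.rnDeriv Q z :=
    (Measure.rnDeriv_mul_rnDeriv hpπ).filter_mono hpQ.ae_le
  have c2 : ∀ᵐ z ∂p, πs.rnDeriv Q z = w z := by
    have : πs.rnDeriv Q =ᵐ[Q] w := by
      rw [hπsd]; exact Measure.rnDeriv_withDensity Q hwm
    exact this.filter_mono hpQ.ae_le
  have dfacts : ∀ᵐ z ∂p, 0 < p.rnDeriv πs z ∧ p.rnDeriv πs z < ⊤ := rnDeriv_facts hpπ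
  -- the key a.e. identity
  have heq : llr p Q =ᵐ[p] fun z => llr p πs z + llr μ mX z.1.1 + llr ν mX z.2.1 := by
    filter_upwards [c1, c2, dfacts, hρp, hσp] with z hc1 hc2 hd hzρ hzσ
    have ha0 : (p.rnDeriv πs z).toReal ≠ 0 := (ENNReal.toReal_pos hd.1.ne' hd.2.ne).ne'
    have hb0 : (ρ z.1.1).toReal ≠ 0 := (ENNReal.toReal_pos hzρ.1.ne' hzρ.2.ne).ne'
    have hc0 : (σ z.2.1).toReal ≠ 0 := (ENNReal.toReal_pos hzσ.1.ne' hzσ.2.ne).ne'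
    have : p.rnDeriv Q z = p.rnDeriv πs z * (ρ z.1.1 * σ z.2.1) := by
      rw [← hc1, hc2]
    unfold llr
    rw [this, ENNReal.toReal_mul, ENNReal.toReal_mul,
      Real.log_mul ha0 (mul_ne_zero hb0 hc0), Real.log_mul hb0 hc0, ← add_assoc]
  -- integrability of the negative parts
  have hAn : Integrable (fun z => max (-llr p πs z) 0) p := integrable_neg_llr hpπ
  have hBμ : Integrable (fun x => max (-llr μ mX x) 0) μ := integrable_neg_llr hμ
  have hBμ' : Integrable (fun x => max (-llr μ mX x) 0)
      (p.map (fun z : (α × α) × α × α => z.1.1)) := by rw [h1]; exact hBμ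
  have hBn : Integrable (fun z : (α × α) × α × α => max (-llr μ mX z.1.1) 0) p :=
    (integrable_map_measure (((measurable_llr μ mX).neg.max
      measurable_const).aestronglyMeasurable) hg1.aemeasurable).mp hBμ'
  have hCν : Integrable (fun x => max (-llr ν mX x) 0) ν := integrable_neg_llr hν
  have hCν' : Integrable (fun x => max (-llr ν mX x) 0)
      (p.map (fun z : (α × α) × α × α => z.2.1)) := by rw [h2]; exact hCν
  have hCn : Integrable (fun z : (α × α) × α × α => max (-llr ν mX z.2.1) 0) p :=
    (integrable_map_measure (((measurable_llr ν mX).neg.max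
      measurable_const).aestronglyMeasurable) hg2.aemeasurable).mp hCν'
  -- integrability of each summand
  have hsum : Integrable (fun z : (α × α) × α × α =>
      llr p πs z + llr μ mX z.1.1 + llr ν mX z.2.1) p := hint.congr heq
  have hBCn : Integrable (fun z : (α × α) × α × α =>
      max (-(llr μ mX z.1.1 + llr ν mX z.2.1)) 0) p := by
    refine Integrable.mono' (hBn.add hCn) ?_ (ae_of_all _ fun z => ?_)
    · exact ((((measurable_llr μ mX).comp hg1).add
        ((measurable_llr ν mX).comp hg2)).neg.max measurable_const).aestronglyMeasurable
    · rw [Real.norm_eq_abs, abs_of_nonneg (le_max_right _ _)]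
      have b1 : -llr μ mX z.1.1 ≤ max (-llr μ mX z.1.1) 0 := le_max_left _ _
      have b2 : (0:ℝ) ≤ max (-llr μ mX z.1.1) 0 := le_max_right _ _
      have b3 : -llr ν mX z.2.1 ≤ max (-llr ν mX z.2.1) 0 := le_max_left _ _
      have b4 : (0:ℝ) ≤ max (-llr ν mX z.2.1) 0 := le_max_right _ _
      exact max_le (by simp only [Pi.add_apply]; linarith) (by simp only [Pi.add_apply]; linarith)
  have hA : Integrable (llr p πs) p := by
    refine integrable_of_add_neg_parts (stronglyMeasurable_llr _ _).aestronglyMeasurable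
      ?_ hAn hBCn
    exact hsum.congr (ae_of_all _ fun z => by ring_nf)
  have hBC : Integrable (fun z : (α × α) × α × α =>
      llr μ mX z.1.1 + llr ν mX z.2.1) p := by
    have := hsum.sub hA
    exact this.congr (ae_of_all _ fun z => by simp; ring)
  have hB : Integrable (fun z : (α × α) × α × α => llr μ mX z.1.1) p := by
    refine integrable_of_add_neg_parts
      ((measurable_llr μ mX).comp hg1).aestronglyMeasurable ?_ hBn hCn
    exact hBC
  have hC : Integrable (fun z : (α × α) × α × α => llr ν mX z.2.1) p := by
    refine integrable_of_add_neg_parts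
      ((measurable_llr ν mX).comp hg2).aestronglyMeasurable ?_ hCn hBn
    exact hBC.congr (ae_of_all _ fun z => by ring_nf)
  have hiμ : Integrable (llr μ mX) μ := by
    have := (integrable_map_measure (g := llr μ mX)
      (by rw [h1]; exact (stronglyMeasurable_llr _ _).aestronglyMeasurable)
      hg1.aemeasurable).mpr hB
    rwa [h1] at this
  have hiν : Integrable (llr ν mX) ν := by
    have := (integrable_map_measure (g := llr ν mX)
      (by rw [h2]; exact (stronglyMeasurable_llr _ _).aestronglyMeasurable)
      hg2.aemeasurable).mpr hC
    rwa [h2] at this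
  -- the integral identity
  have hIB : ∫ z, llr μ mX (z.1.1) ∂p = ∫ x, llr μ mX x ∂μ := by
    have := integral_map (f := llr μ mX) hg1.aemeasurable
      (by rw [h1]; exact (stronglyMeasurable_llr _ _).aestronglyMeasurable)
    rw [h1] at this
    exact this.symm
  have hIC : ∫ z, llr ν mX (z.2.1) ∂p = ∫ x, llr ν mX x ∂ν := by
    have := integral_map (f := llr ν mX) hg2.aemeasurable
      (by rw [h2]; exact (stronglyMeasurable_llr _ _).aestronglyMeasurable)
    rw [h2] at this
    exact this.symm
  refine ⟨hμ, hν, hiμ, hiν, hpπ, hA, ?_⟩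
  have hAB : Integrable (fun z : (α × α) × α × α => llr p πs z + llr μ mX z.1.1) p := hA.add hB
  rw [integral_congr_ae heq, integral_add hAB hC, integral_add hA hB, hIB, hIC]

lemma pistar_facts (hμ : μ ≪ mX) (hν : ν ≪ mX) (hiμ : Integrable (llr μ mX) μ)
    (hiν : Integrable (llr ν mX) ν) :
    (μ.prod mV).prod (ν.prod mV) ≪ (mX.prod mV).prod (mX.prod mV) ∧
    Integrable (llr ((μ.prod mV).prod (ν.prod mV)) ((mX.prod mV).prod (mX.prod mV)))
      ((μ.prod mV).prod (ν.prod mV)) ∧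
    ∫ z, llr ((μ.prod mV).prod (ν.prod mV)) ((mX.prod mV).prod (mX.prod mV)) z
        ∂((μ.prod mV).prod (ν.prod mV))
      = ∫ x, llr μ mX x ∂μ + ∫ x, llr ν mX x ∂ν := by
  set Q := (mX.prod mV).prod (mX.prod mV) with hQ
  set πs := (μ.prod mV).prod (ν.prod mV) with hπsdef
  set ρ := μ.rnDeriv mX with hρ
  set σ := ν.rnDeriv mX with hσ
  have hg1 : Measurable (fun z : (α × α) × α × α => z.1.1) := measurable_fst.comp measurable_fst
  have hg2 : Measurable (fun z : (α × α) × α × α => z.2.1) := measurable_fst.comp measurable_snd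
  have hρm : Measurable ρ := Measure.measurable_rnDeriv μ mX
  have hσm : Measurable σ := Measure.measurable_rnDeriv ν mX
  have h1 : πs.map (fun z : (α × α) × α × α => z.1.1) = μ := map_fst_fst_prod μ mV ν mV
  have h2 : πs.map (fun z : (α × α) × α × α => z.2.1) = ν := map_snd_fst_prod μ mV ν mV
  have hsetρ : MeasurableSet {x | 0 < ρ x ∧ ρ x < ⊤} := by
    have : {x | 0 < ρ x ∧ ρ x < ⊤} = (ρ ⁻¹' {0})ᶜ ∩ (ρ ⁻¹' {⊤})ᶜ := by
      ext x; simp [pos_iff_ne_zero, lt_top_iff_ne_top]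
    rw [this]
    exact ((hρm (measurableSet_singleton 0)).compl).inter
      ((hρm (measurableSet_singleton ⊤)).compl)
  have hsetσ : MeasurableSet {x | 0 < σ x ∧ σ x < ⊤} := by
    have : {x | 0 < σ x ∧ σ x < ⊤} = (σ ⁻¹' {0})ᶜ ∩ (σ ⁻¹' {⊤})ᶜ := by
      ext x; simp [pos_iff_ne_zero, lt_top_iff_ne_top]
    rw [this]
    exact ((hσm (measurableSet_singleton 0)).compl).inter
      ((hσm (measurableSet_singleton ⊤)).compl)
  have hρp : ∀ᵐ z ∂πs, 0 < ρ (z.1.1) ∧ ρ (z.1.1) < ⊤ :=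
    ae_pull hg1 h1 hsetρ (rnDeriv_facts hμ)
  have hσp : ∀ᵐ z ∂πs, 0 < σ (z.2.1) ∧ σ (z.2.1) < ⊤ :=
    ae_pull hg2 h2 hsetσ (rnDeriv_facts hν)
  set w : (α × α) × α × α → ℝ≥0∞ := fun z => ρ z.1.1 * σ z.2.1 with hw
  have hwm : Measurable w := (hρm.comp hg1).mul (hσm.comp hg2)
  have hπsd : πs = Q.withDensity w := prod_prod_withDensity mX mV μ ν hμ hν
  have hac : πs ≪ Q := by rw [hπsd]; exact withDensity_absolutelyContinuous Q w
  have c2 : ∀ᵐ z ∂πs, πs.rnDeriv Q z = w z := by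
    have : πs.rnDeriv Q =ᵐ[Q] w := by
      rw [hπsd]; exact Measure.rnDeriv_withDensity Q hwm
    exact this.filter_mono hac.ae_le
  have heq : llr πs Q =ᵐ[πs] fun z => llr μ mX z.1.1 + llr ν mX z.2.1 := by
    filter_upwards [c2, hρp, hσp] with z hc2 hzρ hzσ
    have hb0 : (ρ z.1.1).toReal ≠ 0 := (ENNReal.toReal_pos hzρ.1.ne' hzρ.2.ne).ne'
    have hc0 : (σ z.2.1).toReal ≠ 0 := (ENNReal.toReal_pos hzσ.1.ne' hzσ.2.ne).ne'
    unfold llr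
    rw [hc2, ENNReal.toReal_mul, Real.log_mul hb0 hc0]
  have hB : Integrable (fun z : (α × α) × α × α => llr μ mX z.1.1) πs := by
    have hiμ' : Integrable (llr μ mX) (πs.map (fun z : (α × α) × α × α => z.1.1)) := by
      rw [h1]; exact hiμ
    refine (integrable_map_measure ?_ hg1.aemeasurable).mp hiμ'
    rw [h1]; exact (stronglyMeasurable_llr _ _).aestronglyMeasurable
  have hC : Integrable (fun z : (α × α) × α × α => llr ν mX z.2.1) πs := by
    have hiν' : Integrable (llr ν mX) (πs.map (fun z : (α × α) × α × α => z.2.1)) := by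
      rw [h2]; exact hiν
    refine (integrable_map_measure ?_ hg2.aemeasurable).mp hiν'
    rw [h2]; exact (stronglyMeasurable_llr _ _).aestronglyMeasurable
  have hint : Integrable (llr πs Q) πs := (hB.add hC).congr heq.symm
  have hIB : ∫ z, llr μ mX (z.1.1) ∂πs = ∫ x, llr μ mX x ∂μ := by
    have := integral_map (φ := fun z : (α × α) × α × α => z.1.1) hg1.aemeasurable
      (f := llr μ mX) (by rw [h1]; exact (stronglyMeasurable_llr _ _).aestronglyMeasurable)
    rw [h1] at this
    exact this.symm
  have hIC : ∫ z, llr ν mX (z.2.1) ∂πs = ∫ x, llr ν mX x ∂ν := by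
    have := integral_map (φ := fun z : (α × α) × α × α => z.2.1) hg2.aemeasurable
      (f := llr ν mX) (by rw [h2]; exact (stronglyMeasurable_llr _ _).aestronglyMeasurable)
    rw [h2] at this
    exact this.symm
  exact ⟨hac, hint, by rw [integral_congr_ae heq, integral_add hB hC, hIB, hIC]⟩

lemma relEntropy_ne_bot {α : Type*} [MeasurableSpace α] (P Q : Measure α) :
    relEntropy P Q ≠ ⊥ := by
  unfold relEntropy; split_ifs <;> simp

end Helpers

/-- the solution of the limiting entropy minimization problem
`min over Π_X(μ,ν) of H(·| m ⊗ m)` with `m = m_X ⊗ m_V` is `(μ ⊗ m_V) ⊗ (ν ⊗ m_V)`,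
with optimal value `H(μ|m_X) + H(ν|m_X)`. -/

theorem limiting_problem_kinetic
    (d : ℕ)
    (mX mV μ ν : Measure (EuclideanSpace ℝ (Fin d)))
    [IsProbabilityMeasure mX] [IsProbabilityMeasure mV]
    [IsProbabilityMeasure μ] [IsProbabilityMeasure ν] :
    (∀ p ∈ PiX μ ν,
        relEntropy μ mX + relEntropy ν mX ≤ relEntropy p ((mX.prod mV).prod (mX.prod mV))) ∧
    (μ.prod mV).prod (ν.prod mV) ∈ PiX μ ν ∧
    relEntropy ((μ.prod mV).prod (ν.prod mV)) ((mX.prod mV).prod (mX.prod mV))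
      = relEntropy μ mX + relEntropy ν mX ∧
    ((relEntropy μ mX ≠ ⊤ ∧ relEntropy ν mX ≠ ⊤) →
      ∀ p ∈ PiX μ ν, p ≠ (μ.prod mV).prod (ν.prod mV) →
        relEntropy ((μ.prod mV).prod (ν.prod mV)) ((mX.prod mV).prod (mX.prod mV))
          < relEntropy p ((mX.prod mV).prod (mX.prod mV))) := by
  set Q := (mX.prod mV).prod (mX.prod mV) with hQdef
  set πs := (μ.prod mV).prod (ν.prod mV) with hπdef
  have hmem : πs ∈ PiX μ ν :=
    ⟨inferInstance, map_fst_fst_prod μ mV ν mV, map_snd_fst_prod μ mV ν mV⟩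
  have part1 : ∀ p ∈ PiX μ ν, relEntropy μ mX + relEntropy ν mX ≤ relEntropy p Q := by
    rintro p ⟨hprob, h1, h2⟩
    haveI := hprob
    by_cases hc : p ≪ Q ∧ Integrable (llr p Q) p
    · obtain ⟨hμac, hνac, hiμ, hiν, hpπ, hiA, hsum⟩ := master mX mV μ ν h1 h2 hc.1 hc.2
      simp only [relEntropy]
      rw [if_pos hc, if_pos ⟨hμac, hiμ⟩, if_pos ⟨hνac, hiν⟩, ← EReal.coe_add,
        EReal.coe_le_coe_iff, hsum]
      have := integral_llr_nonneg' hpπ hiA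
      linarith
    · simp only [relEntropy]
      rw [if_neg hc]
      exact le_top
  refine ⟨part1, hmem, ?_, ?_⟩
  · by_cases hcμ : μ ≪ mX ∧ Integrable (llr μ mX) μ
    · by_cases hcν : ν ≪ mX ∧ Integrable (llr ν mX) ν
      · obtain ⟨hac, hi, hval⟩ := pistar_facts mX mV μ ν hcμ.1 hcν.1 hcμ.2 hcν.2
        simp only [relEntropy]
        rw [if_pos ⟨hac, hi⟩, if_pos hcμ, if_pos hcν, hval, EReal.coe_add]
      · have htopπ : ¬(πs ≪ Q ∧ Integrable (llr πs Q) πs) := by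
          intro hc
          obtain ⟨hμac, hνac, hiμ, hiν, _⟩ := master mX mV μ ν hmem.2.1 hmem.2.2 hc.1 hc.2
          exact hcν ⟨hνac, hiν⟩
        rw [show relEntropy πs Q = ⊤ from by simp only [relEntropy]; rw [if_neg htopπ],
          show relEntropy ν mX = ⊤ from by simp only [relEntropy]; rw [if_neg hcν],
          EReal.add_top_of_ne_bot (relEntropy_ne_bot _ _)]
    · have htopπ : ¬(πs ≪ Q ∧ Integrable (llr πs Q) πs) := by
        intro hc
        obtain ⟨hμac, hνac, hiμ, hiν, _⟩ := master mX mV μ ν hmem.2.1 hmem.2.2 hc.1 hc.2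
        exact hcμ ⟨hμac, hiμ⟩
      rw [show relEntropy πs Q = ⊤ from by simp only [relEntropy]; rw [if_neg htopπ],
        show relEntropy μ mX = ⊤ from by simp only [relEntropy]; rw [if_neg hcμ],
        EReal.top_add_of_ne_bot (relEntropy_ne_bot _ _)]
  · rintro ⟨hμt, hνt⟩ p hp hne
    have hcμ : μ ≪ mX ∧ Integrable (llr μ mX) μ := by
      by_contra hcon
      exact hμt (by simp only [relEntropy]; rw [if_neg hcon])
    have hcν : ν ≪ mX ∧ Integrable (llr ν mX) ν := by
      by_contra hcon
      exact hνt (by simp only [relEntropy]; rw [if_neg hcon])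
    obtain ⟨hac, hi, hval⟩ := pistar_facts mX mV μ ν hcμ.1 hcν.1 hcμ.2 hcν.2
    obtain ⟨hprob, h1, h2⟩ := hp
    haveI := hprob
    by_cases hc : p ≪ Q ∧ Integrable (llr p Q) p
    · obtain ⟨hμac, hνac, hiμ, hiν, hpπ, hiA, hsum⟩ := master mX mV μ ν h1 h2 hc.1 hc.2
      simp only [relEntropy]
      rw [if_pos ⟨hac, hi⟩, if_pos hc, EReal.coe_lt_coe_iff, hval, hsum]
      have hpos : 0 < ∫ z, llr p πs z ∂p := by
        rcases lt_or_eq_of_le (integral_llr_nonneg' hpπ hiA) with h | h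
        · exact h
        · exact absurd (eq_of_integral_llr_eq_zero hpπ hiA h.symm) hne
      linarith
    · simp only [relEntropy]
      rw [if_neg hc, if_pos ⟨hac, hi⟩]
      exact EReal.coe_lt_top _
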